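/- Let (λ_k)_{k∈ℕ} be complex numbers with Re λ_k < 0 for every k and ∑_k |Re λ_k| < ∞. Then for every λ ∈ ℂ with Re λ > 0 the infinite product Θ(λ) = ∏_k (λ + conj(λ_k))/(λ − λ_k) converges (the family of factors is multipliable), each factor and the product satisfy |(λ + conj(λ_k))/(λ − λ_k)| < 1 and |Θ(λ)| ≤ 1, and along the positive real axis one has the asymptotic expansion lim_{x→+∞} x (Θ(x) − 1) = 2 ∑_k Re λ_k. -/

import Mathlib

open Filter Topology

noncomputable section

lemma aux_hasProd_zero {f : ℕ → ℂ} (j : ℕ) (hj : f j = 0) : HasProd f 0 := by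
  have h : ∀ᶠ s : Finset ℕ in atTop, ∏ k ∈ s, f k = 0 := by
    filter_upwards [Filter.eventually_ge_atTop ({j} : Finset ℕ)] with s hs
    exact Finset.prod_eq_zero (Finset.singleton_subset_iff.mp hs) hj
  exact Tendsto.congr' (by filter_upwards [h] with s hs using hs.symm) tendsto_const_nhds

lemma aux_multipliable_one_add {f : ℕ → ℂ} (hf : Summable fun k => ‖f k‖) :
    Multipliable fun k => 1 + f k := by
  by_cases h0 : ∃ j, 1 + f j = 0
  · obtain ⟨j, hj⟩ := h0
    exact ⟨0, aux_hasProd_zero j hj⟩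
  push_neg at h0
  have hlog : Summable fun k => Complex.log (1 + f k) := by
    have hten : Tendsto (fun k => ‖f k‖) atTop (𝓝 0) := hf.tendsto_atTop_zero
    have hev : ∀ᶠ k in atTop, ‖f k‖ ≤ 1/2 :=
      hten.eventually (eventually_le_nhds (by norm_num))
    apply Summable.of_norm_bounded_eventually (g := fun k => (3/2) * ‖f k‖) (hf.mul_left _)
    rw [Nat.cofinite_eq_atTop]
    filter_upwards [hev] with k hk
    exact Complex.norm_log_one_add_half_le_self hk
  exact Complex.multipliable_of_summable_log hlog

lemma aux_norm_prod_le (f : ℕ → ℂ) (s : Finset ℕ) :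
    ‖∏ k ∈ s, (1 + f k)‖ ≤ ∏ k ∈ s, (1 + ‖f k‖) := by
  rw [norm_prod]
  refine Finset.prod_le_prod (fun _ _ => norm_nonneg _) (fun k _ => ?_)
  calc ‖1 + f k‖ ≤ ‖(1 : ℂ)‖ + ‖f k‖ := norm_add_le _ _
    _ = 1 + ‖f k‖ := by rw [norm_one]

lemma aux_prod_sub_one (f : ℕ → ℂ) (s : Finset ℕ) :
    ‖(∏ k ∈ s, (1 + f k)) - 1‖ ≤ (∏ k ∈ s, (1 + ‖f k‖)) - 1 := by
  classical
  induction s using Finset.cons_induction with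
  | empty => simp
  | cons j s hj ih =>
    rw [Finset.prod_cons, Finset.prod_cons]
    have h1 : (1 + f j) * ∏ k ∈ s, (1 + f k) - 1
        = ((∏ k ∈ s, (1 + f k)) - 1) + f j * ∏ k ∈ s, (1 + f k) := by ring
    rw [h1]
    calc ‖((∏ k ∈ s, (1 + f k)) - 1) + f j * ∏ k ∈ s, (1 + f k)‖
        ≤ ‖(∏ k ∈ s, (1 + f k)) - 1‖ + ‖f j‖ * ‖∏ k ∈ s, (1 + f k)‖ := by
          refine (norm_add_le _ _).trans ?_
          rw [norm_mul]
      _ ≤ ((∏ k ∈ s, (1 + ‖f k‖)) - 1) + ‖f j‖ * ∏ k ∈ s, (1 + ‖f k‖) :=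
          add_le_add ih (mul_le_mul_of_nonneg_left (aux_norm_prod_le f s) (norm_nonneg _))
      _ = (1 + ‖f j‖) * ∏ k ∈ s, (1 + ‖f k‖) - 1 := by ring

lemma aux_prod_sub_one_sub_sum (f : ℕ → ℂ) (s : Finset ℕ) :
    ‖(∏ k ∈ s, (1 + f k)) - 1 - ∑ k ∈ s, f k‖
      ≤ (∏ k ∈ s, (1 + ‖f k‖)) - 1 - ∑ k ∈ s, ‖f k‖ := by
  classical
  induction s using Finset.cons_induction with
  | empty => simp
  | cons j s hj ih =>
    rw [Finset.prod_cons, Finset.prod_cons, Finset.sum_cons, Finset.sum_cons]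
    have h1 : (1 + f j) * ∏ k ∈ s, (1 + f k) - 1 - (f j + ∑ k ∈ s, f k)
        = ((∏ k ∈ s, (1 + f k)) - 1 - ∑ k ∈ s, f k)
          + f j * ((∏ k ∈ s, (1 + f k)) - 1) := by ring
    rw [h1]
    calc ‖((∏ k ∈ s, (1 + f k)) - 1 - ∑ k ∈ s, f k)
          + f j * ((∏ k ∈ s, (1 + f k)) - 1)‖
        ≤ ‖(∏ k ∈ s, (1 + f k)) - 1 - ∑ k ∈ s, f k‖
          + ‖f j‖ * ‖(∏ k ∈ s, (1 + f k)) - 1‖ := by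
          refine (norm_add_le _ _).trans ?_
          rw [norm_mul]
      _ ≤ ((∏ k ∈ s, (1 + ‖f k‖)) - 1 - ∑ k ∈ s, ‖f k‖)
          + ‖f j‖ * ((∏ k ∈ s, (1 + ‖f k‖)) - 1) :=
          add_le_add ih (mul_le_mul_of_nonneg_left (aux_prod_sub_one f s) (norm_nonneg _))
      _ = (1 + ‖f j‖) * ∏ k ∈ s, (1 + ‖f k‖) - 1 - (‖f j‖ + ∑ k ∈ s, ‖f k‖) := by ring

lemma aux_prod_le_exp (f : ℕ → ℂ) (s : Finset ℕ) :
    ∏ k ∈ s, (1 + ‖f k‖) ≤ Real.exp (∑ k ∈ s, ‖f k‖) := by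
  rw [Real.exp_sum]
  exact Finset.prod_le_prod (fun k _ => by positivity)
    (fun k _ => by linarith [Real.add_one_le_exp ‖f k‖])

lemma aux_g_mono {s t : ℝ} (hs : 0 ≤ s) (hst : s ≤ t) :
    Real.exp s - 1 - s ≤ Real.exp t - 1 - t := by
  have h1 := Real.add_one_le_exp (t - s)
  have h2 : 1 ≤ Real.exp s := Real.one_le_exp hs
  have h3 : Real.exp t = Real.exp s * Real.exp (t - s) := by
    rw [← Real.exp_add]; ring_nf
  nlinarith [Real.exp_pos (t - s)]

lemma aux_key {f : ℕ → ℂ} (hf : Summable fun k => ‖f k‖) :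
    ‖(∏' k, (1 + f k)) - 1 - ∑' k, f k‖
      ≤ Real.exp (∑' k, ‖f k‖) - 1 - ∑' k, ‖f k‖ := by
  have hm := aux_multipliable_one_add hf
  have hsf : Summable f := hf.of_norm
  have hT : ∀ s : Finset ℕ, ∑ k ∈ s, ‖f k‖ ≤ ∑' k, ‖f k‖ :=
    fun s => Summable.sum_le_tsum s (fun k _ => norm_nonneg _) hf
  have hten : Tendsto (fun s : Finset ℕ =>
      ‖(∏ k ∈ s, (1 + f k)) - 1 - ∑ k ∈ s, f k‖) atTop
      (𝓝 ‖(∏' k, (1 + f k)) - 1 - ∑' k, f k‖) :=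
    (((hm.hasProd.sub tendsto_const_nhds).sub hsf.hasSum)).norm
  refine le_of_tendsto hten (Eventually.of_forall fun s => ?_)
  calc ‖(∏ k ∈ s, (1 + f k)) - 1 - ∑ k ∈ s, f k‖
      ≤ (∏ k ∈ s, (1 + ‖f k‖)) - 1 - ∑ k ∈ s, ‖f k‖ := aux_prod_sub_one_sub_sum f s
    _ ≤ Real.exp (∑ k ∈ s, ‖f k‖) - 1 - ∑ k ∈ s, ‖f k‖ := by
        linarith [aux_prod_le_exp f s]
    _ ≤ Real.exp (∑' k, ‖f k‖) - 1 - ∑' k, ‖f k‖ :=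
        aux_g_mono (Finset.sum_nonneg fun k _ => norm_nonneg _) (hT s)

lemma aux_factor {lamk z : ℂ} (h : z - lamk ≠ 0) :
    (z + starRingEnd ℂ lamk) / (z - lamk) = 1 + 2 * (lamk.re : ℂ) / (z - lamk) := by
  have hnum : z + starRingEnd ℂ lamk = (z - lamk) + 2 * (lamk.re : ℂ) := by
    have h2 := Complex.add_conj lamk
    push_cast at h2
    rw [eq_comm, sub_add_eq_add_sub]
    rw [show (2 : ℂ) * (lamk.re : ℂ) = lamk + starRingEnd ℂ lamk from h2.symm]
    ring
  rw [hnum, add_div, div_self h]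

lemma aux_ne {lamk z : ℂ} (hre : lamk.re < 0) (hz : 0 < z.re) : z - lamk ≠ 0 := by
  intro h0
  have : (z - lamk).re = 0 := by rw [h0]; simp
  rw [Complex.sub_re] at this
  linarith

lemma aux_norm_den {lamk z : ℂ} (hre : lamk.re < 0) (hz : 0 < z.re) :
    z.re ≤ ‖z - lamk‖ := by
  have h1 : (z - lamk).re ≤ ‖z - lamk‖ := Complex.re_le_norm _
  rw [Complex.sub_re] at h1
  linarith

lemma aux_norm_u {lamk z : ℂ} (hre : lamk.re < 0) (hz : 0 < z.re) :
    ‖2 * (lamk.re : ℂ) / (z - lamk)‖ ≤ 2 * |lamk.re| / z.re := by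
  rw [norm_div, norm_mul, Complex.norm_real, Real.norm_eq_abs]
  have h2 : ‖(2 : ℂ)‖ = 2 := by norm_num
  rw [h2]
  have hd := aux_norm_den hre hz
  exact div_le_div_of_nonneg_left (by positivity) hz hd

lemma aux_norm_lt {lamk z : ℂ} (hre : lamk.re < 0) (hz : 0 < z.re) :
    ‖(z + starRingEnd ℂ lamk) / (z - lamk)‖ < 1 := by
  have hd := aux_ne hre hz
  have hd0 : 0 < ‖z - lamk‖ := by
    simpa [norm_pos_iff] using hd
  rw [norm_div, div_lt_one hd0]
  refine lt_of_pow_lt_pow_left₀ 2 (norm_nonneg _) ?_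
  have hsq : ∀ w : ℂ, ‖w‖ ^ 2 = Complex.normSq w := fun w => by
    rw [Complex.sq_norm]
  rw [hsq, hsq, Complex.normSq_apply, Complex.normSq_apply]
  simp only [Complex.add_re, Complex.add_im, Complex.sub_re, Complex.sub_im,
    Complex.conj_re, Complex.conj_im]
  nlinarith [hz, hre, sq_nonneg (z.im - lamk.im), sq_nonneg (z.im + lamk.im)]


lemma aux_exp_quad {t : ℝ} (h0 : 0 ≤ t) (h1 : t ≤ 1) :
    Real.exp t - 1 - t ≤ t ^ 2 := by
  have hb := Real.exp_bound (n := 2) (by rwa [abs_of_nonneg h0]) (by norm_num)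
  rw [abs_of_nonneg h0] at hb
  have hs : ∑ m ∈ Finset.range 2, t ^ m / m.factorial = 1 + t := by
    simp [Finset.sum_range_succ]
  rw [hs] at hb
  have h2 := (abs_le.mp hb).2
  norm_num [Nat.factorial] at h2
  nlinarith [sq_nonneg t]

lemma aux_tend_zero (lamk : ℂ) (hre : lamk.re < 0) :
    Tendsto (fun x : ℝ => lamk / ((x : ℂ) - lamk)) atTop (𝓝 0) := by
  apply squeeze_zero_norm' (a := fun x : ℝ => ‖lamk‖ / x)
  · filter_upwards [eventually_gt_atTop (0 : ℝ)] with x hx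
    have hz : 0 < ((x : ℂ)).re := by simpa using hx
    have hd : ((x : ℂ)).re ≤ ‖(x : ℂ) - lamk‖ := aux_norm_den hre hz
    rw [norm_div]
    have hxd : (x : ℝ) ≤ ‖(x : ℂ) - lamk‖ := by simpa using hd
    exact div_le_div_of_nonneg_left (norm_nonneg _) hx hxd
  · exact tendsto_const_nhds.div_atTop tendsto_id

lemma aux_pointwise (lamk : ℂ) (hre : lamk.re < 0) :
    Tendsto (fun x : ℝ => 2 * (lamk.re : ℂ) * (x : ℂ) / ((x : ℂ) - lamk)) atTop
      (𝓝 (2 * (lamk.re : ℂ))) := by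
  have h0 := aux_tend_zero lamk hre
  have h1 : Tendsto (fun x : ℝ => 2 * (lamk.re : ℂ)
      + 2 * (lamk.re : ℂ) * (lamk / ((x : ℂ) - lamk))) atTop
      (𝓝 (2 * (lamk.re : ℂ) + 2 * (lamk.re : ℂ) * 0)) :=
    tendsto_const_nhds.add (h0.const_mul _)
  rw [mul_zero, add_zero] at h1
  refine h1.congr' ?_
  filter_upwards [eventually_gt_atTop (0 : ℝ)] with x hx
  have hd : (x : ℂ) - lamk ≠ 0 := aux_ne hre (by simpa using hx)
  field_simp
  ring

theorem stmt13
    (lam : ℕ → ℂ)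
    (hre : ∀ k, (lam k).re < 0)
    (hsum : Summable fun k => |(lam k).re|) :
    (∀ z : ℂ, 0 < z.re →
      Multipliable fun k => (z + starRingEnd ℂ (lam k)) / (z - lam k)) ∧
    (∀ z : ℂ, 0 < z.re → ∀ k, ‖(z + starRingEnd ℂ (lam k)) / (z - lam k)‖ < 1) ∧
    (∀ z : ℂ, 0 < z.re → ‖∏' k, (z + starRingEnd ℂ (lam k)) / (z - lam k)‖ ≤ 1) ∧
    Tendsto
      (fun x : ℝ =>
        (x : ℂ) * ((∏' k, ((x : ℂ) + starRingEnd ℂ (lam k)) / ((x : ℂ) - lam k)) - 1))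
      atTop (𝓝 (2 * ∑' k, ((lam k).re : ℂ))) := by
  have hsumu : ∀ z : ℂ, 0 < z.re →
      Summable fun k => ‖2 * ((lam k).re : ℂ) / (z - lam k)‖ := by
    intro z hz
    refine Summable.of_nonneg_of_le (fun k => norm_nonneg _)
      (fun k => aux_norm_u (hre k) hz) ?_
    simpa [div_eq_mul_inv, mul_comm, mul_assoc] using ((hsum.mul_left 2).div_const z.re)
  have hmult : ∀ z : ℂ, 0 < z.re →
      Multipliable fun k => (z + starRingEnd ℂ (lam k)) / (z - lam k) := by
    intro z hz
    have := aux_multipliable_one_add (hsumu z hz)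
    exact this.congr fun k => (aux_factor (aux_ne (hre k) hz)).symm
  refine ⟨hmult, fun z hz k => aux_norm_lt (hre k) hz, ?_, ?_⟩
  · intro z hz
    have hm := hmult z hz
    refine le_of_tendsto hm.hasProd.norm (Eventually.of_forall fun s => ?_)
    exact Finset.prod_le_one (fun k _ => norm_nonneg _)
      (fun k _ => (aux_norm_lt (hre k) hz).le)
  · -- part 4
    have hS0 : 0 ≤ ∑' k, |(lam k).re| := tsum_nonneg fun k => abs_nonneg _
    set S := ∑' k, |(lam k).re| with hSdef
    have hF : Tendsto (fun x : ℝ =>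
        ∑' k, 2 * ((lam k).re : ℂ) * (x : ℂ) / ((x : ℂ) - lam k)) atTop
        (𝓝 (∑' k, 2 * ((lam k).re : ℂ))) := by
      apply tendsto_tsum_of_dominated_convergence (bound := fun k => 2 * |(lam k).re|)
        (hsum.mul_left 2) (fun k => aux_pointwise (lam k) (hre k))
      filter_upwards [eventually_gt_atTop (0 : ℝ)] with x hx k
      have hz : 0 < ((x : ℂ)).re := by simpa using hx
      have hd : (x : ℝ) ≤ ‖(x : ℂ) - lam k‖ := by
        simpa using aux_norm_den (hre k) hz
      have hd0 : 0 < ‖(x : ℂ) - lam k‖ := lt_of_lt_of_le hx hd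
      rw [norm_div, div_le_iff₀ hd0, norm_mul, norm_mul]
      have e1 : ‖(2 : ℂ)‖ = 2 := by norm_num
      have e2 : ‖((lam k).re : ℂ)‖ = |(lam k).re| := by
        rw [Complex.norm_real, Real.norm_eq_abs]
      have e3 : ‖((x : ℝ) : ℂ)‖ = x := by
        rw [Complex.norm_real, Real.norm_eq_abs, abs_of_pos hx]
      rw [e1, e2, e3]
      nlinarith [abs_nonneg (lam k).re]
    have htl : (∑' k, 2 * ((lam k).re : ℂ)) = 2 * ∑' k, ((lam k).re : ℂ) := tsum_mul_left
    rw [htl] at hF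
    have hG : Tendsto (fun x : ℝ => (x : ℂ) *
        ((∏' k, (1 + 2 * ((lam k).re : ℂ) / ((x : ℂ) - lam k))) - 1
          - ∑' k, 2 * ((lam k).re : ℂ) / ((x : ℂ) - lam k))) atTop (𝓝 0) := by
      apply squeeze_zero_norm' (a := fun x : ℝ => 4 * S ^ 2 / x)
      · filter_upwards [eventually_ge_atTop (max 1 (2 * S))] with x hx
        have hx1 : (1 : ℝ) ≤ x := le_trans (le_max_left _ _) hx
        have hx2S : 2 * S ≤ x := le_trans (le_max_right _ _) hx
        have hx0 : (0 : ℝ) < x := lt_of_lt_of_le one_pos hx1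
        have hz : 0 < ((x : ℂ)).re := by simpa using hx0
        have hsu := hsumu (x : ℂ) hz
        have hkey := aux_key hsu
        have hT2 : (∑' k, ‖2 * ((lam k).re : ℂ) / ((x : ℂ) - lam k)‖) ≤ 2 * S / x := by
          have hb : ∀ k, ‖2 * ((lam k).re : ℂ) / ((x : ℂ) - lam k)‖
              ≤ 2 * |(lam k).re| / x := fun k => by
            simpa using aux_norm_u (hre k) hz
          calc (∑' k, ‖2 * ((lam k).re : ℂ) / ((x : ℂ) - lam k)‖)
              ≤ ∑' k, 2 * |(lam k).re| / x :=
                Summable.tsum_le_tsum hb hsu ((hsum.mul_left 2).div_const x)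
            _ = 2 * S / x := by rw [tsum_div_const, tsum_mul_left]
        have hTnn : 0 ≤ ∑' k, ‖2 * ((lam k).re : ℂ) / ((x : ℂ) - lam k)‖ :=
          tsum_nonneg fun k => norm_nonneg _
        have hq : Real.exp (2 * S / x) - 1 - 2 * S / x ≤ (2 * S / x) ^ 2 :=
          aux_exp_quad (by positivity) ((div_le_one hx0).mpr hx2S)
        have e3 : ‖((x : ℝ) : ℂ)‖ = x := by
          rw [Complex.norm_real, Real.norm_eq_abs, abs_of_pos hx0]
        rw [norm_mul, e3]
        calc x * ‖(∏' k, (1 + 2 * ((lam k).re : ℂ) / ((x : ℂ) - lam k))) - 1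
              - ∑' k, 2 * ((lam k).re : ℂ) / ((x : ℂ) - lam k)‖
            ≤ x * (Real.exp (2 * S / x) - 1 - 2 * S / x) := by
              refine mul_le_mul_of_nonneg_left (hkey.trans ?_) hx0.le
              exact aux_g_mono hTnn hT2
          _ ≤ x * (2 * S / x) ^ 2 := mul_le_mul_of_nonneg_left hq hx0.le
          _ = 4 * S ^ 2 / x := by field_simp; ring
      · exact tendsto_const_nhds.div_atTop tendsto_id
    have hFG := hF.add hG
    rw [add_zero] at hFG
    refine hFG.congr' ?_
    filter_upwards [eventually_gt_atTop (0 : ℝ)] with x hx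
    have hz : 0 < ((x : ℂ)).re := by simpa using hx
    have hprod : (∏' k, ((x : ℂ) + starRingEnd ℂ (lam k)) / ((x : ℂ) - lam k))
        = ∏' k, (1 + 2 * ((lam k).re : ℂ) / ((x : ℂ) - lam k)) :=
      tprod_congr fun k => aux_factor (aux_ne (hre k) hz)
    have hsum_eq : (∑' k, 2 * ((lam k).re : ℂ) * (x : ℂ) / ((x : ℂ) - lam k))
        = (x : ℂ) * ∑' k, 2 * ((lam k).re : ℂ) / ((x : ℂ) - lam k) := by
      rw [← tsum_mul_left]
      exact tsum_congr fun k => by ring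
    rw [hprod, hsum_eq]
    ring
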